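/- arXiv:1402.2688 — 2 statements merged into one kernel-verified Lean document; each statement's English description precedes it below -/
import Mathlib

section
/- For every real λ > 1 and every real L with 0 < L and √(λ²−1)·L < 2π, one has λ·L − 4·arctan( (λ/√(λ²−1)) · tan( (√(λ²−1)/4)·L ) ) ≥ L − 4·arctan( L/4 ). (This is the real inequality showing that the lower bound of the main theorem in the case λ > k implies the λ-independent lower bound stated for λ ≥ k, with the normalization k = 1.) -/
open Real Filter Topology

noncomputable def lf (L : ℝ) : ℝ → ℝ := fun y =>
  y * L - 4 * Real.arctan ((y / Real.sqrt (y ^ 2 - 1)) *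
      Real.tan ((Real.sqrt (y ^ 2 - 1) / 4) * L))

lemma lf_hasDerivAt (L x : ℝ) (hL : 0 < L) (hx : 1 < x)
    (harg : Real.sqrt (x ^ 2 - 1) * L < 2 * π) :
    HasDerivAt (lf L)
      (4 * (Real.tan (Real.sqrt (x ^ 2 - 1) / 4 * L) - Real.sqrt (x ^ 2 - 1) / 4 * L) /
        ((Real.sqrt (x ^ 2 - 1)) ^ 3 *
          (1 + (x / Real.sqrt (x ^ 2 - 1) * Real.tan (Real.sqrt (x ^ 2 - 1) / 4 * L)) ^ 2))) x := by
  set s := Real.sqrt (x ^ 2 - 1) with hs_def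
  have hx2 : (0:ℝ) < x ^ 2 - 1 := by nlinarith
  have hs : 0 < s := Real.sqrt_pos.mpr hx2
  have hs2 : s ^ 2 = x ^ 2 - 1 := Real.sq_sqrt hx2.le
  set t := s / 4 * L with ht_def
  have ht0 : 0 < t := by positivity
  have htlt : t < π / 2 := by
    rw [ht_def]; nlinarith [Real.pi_pos]
  have hcos : Real.cos t ≠ 0 :=
    (Real.cos_pos_of_mem_Ioo ⟨by linarith [Real.pi_pos], htlt⟩).ne'
  have h1 : HasDerivAt (fun y : ℝ => y ^ 2 - 1) (2 * x) x := by
    simpa using ((hasDerivAt_pow 2 x).sub_const 1)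
  have h2 : HasDerivAt (fun y : ℝ => Real.sqrt (y ^ 2 - 1)) (x / s) x := by
    have := (Real.hasDerivAt_sqrt hx2.ne').comp x h1
    refine this.congr_deriv (Eq.symm ?_)
    field_simp [hs_def]
    ring
  have h3 : HasDerivAt (fun y : ℝ => Real.sqrt (y ^ 2 - 1) / 4 * L) (x / s / 4 * L) x :=
    (h2.div_const 4).mul_const L
  have h4 : HasDerivAt (fun y : ℝ => Real.tan (Real.sqrt (y ^ 2 - 1) / 4 * L))
      (1 / Real.cos t ^ 2 * (x / s / 4 * L)) x :=
    HasDerivAt.comp (h₂ := Real.tan) x (Real.hasDerivAt_tan hcos) h3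
  have h5 : HasDerivAt (fun y : ℝ => y / Real.sqrt (y ^ 2 - 1))
      ((1 * s - x * (x / s)) / s ^ 2) x :=
    (hasDerivAt_id x).div h2 hs.ne'
  have h6 := h5.mul h4
  have h7 := (Real.hasDerivAt_arctan (x / s * Real.tan t)).comp x h6
  have h8 : HasDerivAt (fun y : ℝ => y * L) L x := by
    simpa using (hasDerivAt_id x).mul_const L
  have final := h8.sub (h7.const_mul 4)
  refine final.congr_deriv (Eq.symm ?_)
  have hsec : 1 / Real.cos t ^ 2 = Real.tan t ^ 2 + 1 := by
    rw [Real.tan_eq_sin_div_cos]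
    field_simp
    exact (sin_sq_add_cos_sq t).symm
  have hx2eq : x ^ 2 = s ^ 2 + 1 := by linarith
  rw [← hs_def, hsec, ht_def]
  field_simp
  ring_nf
  linear_combination (s*L - 4*Real.tan (s*L*(1/4))) * hx2eq

lemma lf_deriv_nonneg (L x : ℝ) (hL : 0 < L) (hx : 1 < x)
    (harg : Real.sqrt (x ^ 2 - 1) * L < 2 * π) : 0 ≤ deriv (lf L) x := by
  rw [(lf_hasDerivAt L x hL hx harg).deriv]
  have hx2 : (0:ℝ) < x ^ 2 - 1 := by nlinarith
  have hs : 0 < Real.sqrt (x ^ 2 - 1) := Real.sqrt_pos.mpr hx2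
  set s := Real.sqrt (x ^ 2 - 1)
  have ht0 : 0 < s / 4 * L := by positivity
  have htlt : s / 4 * L < π / 2 := by nlinarith [Real.pi_pos]
  have htan := Real.lt_tan ht0 htlt
  apply div_nonneg (by linarith)
  positivity

lemma lf_mono_le (L : ℝ) (hL : 0 < L) (lam : ℝ) (hlam : 1 < lam)
    (harg : Real.sqrt (lam ^ 2 - 1) * L < 2 * π) :
    ∀ y ∈ Set.Ioo (1:ℝ) lam, lf L y ≤ lf L lam := by
  intro y hy
  have key : ∀ z ∈ Set.Icc y lam, 1 < z ∧ Real.sqrt (z ^ 2 - 1) * L < 2 * π := by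
    intro z hz
    have hz1 : 1 < z := lt_of_lt_of_le hy.1 hz.1
    refine ⟨hz1, lt_of_le_of_lt ?_ harg⟩
    have : Real.sqrt (z ^ 2 - 1) ≤ Real.sqrt (lam ^ 2 - 1) := by
      apply Real.sqrt_le_sqrt
      nlinarith [hz.2]
    nlinarith
  have mono : MonotoneOn (lf L) (Set.Icc y lam) := by
    apply monotoneOn_of_deriv_nonneg (convex_Icc y lam)
    · intro z hz
      exact (lf_hasDerivAt L z hL (key z hz).1 (key z hz).2).continuousAt.continuousWithinAt
    · intro z hz
      rw [interior_Icc] at hz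
      have hz' := key z (Set.Ioo_subset_Icc_self hz)
      exact (lf_hasDerivAt L z hL hz'.1 hz'.2).differentiableAt.differentiableWithinAt
    · intro z hz
      rw [interior_Icc] at hz
      have hz' := key z (Set.Ioo_subset_Icc_self hz)
      exact lf_deriv_nonneg L z hL hz'.1 hz'.2
  exact mono (Set.left_mem_Icc.mpr (le_of_lt hy.2)) (Set.right_mem_Icc.mpr (le_of_lt hy.2))
    (le_of_lt hy.2)

lemma tan_div_self_tendsto : Tendsto (fun v : ℝ => Real.tan v / v) (𝓝[≠] 0) (𝓝 1) := by
  have h := Real.hasDerivAt_tan (x := 0) (by simp)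
  rw [hasDerivAt_iff_tendsto_slope] at h
  have h' : Tendsto (slope Real.tan 0) (𝓝[≠] 0) (𝓝 1) := by
    simpa using h
  refine h'.congr fun v => ?_
  simp [slope_def_field, div_eq_inv_mul]

lemma lf_tendsto (L : ℝ) (hL : 0 < L) :
    Tendsto (lf L) (𝓝[>] (1:ℝ)) (𝓝 (L - 4 * Real.arctan (L / 4))) := by
  set u : ℝ → ℝ := fun y => Real.sqrt (y ^ 2 - 1) / 4 * L with hu_def
  have hu0 : Tendsto u (𝓝 (1:ℝ)) (𝓝 0) := by
    have hc : Continuous u := by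
      have h : Continuous fun y : ℝ => y ^ 2 - 1 := by continuity
      exact ((Real.continuous_sqrt.comp h).div_const 4).mul continuous_const
    have := hc.tendsto 1
    simpa [hu_def] using this
  have hupos : ∀ y ∈ Set.Ioi (1:ℝ), u y ∈ Set.Ioi (0:ℝ) := by
    intro y hy
    have : (0:ℝ) < y ^ 2 - 1 := by simp at hy; nlinarith
    have := Real.sqrt_pos.mpr this
    simp only [hu_def, Set.mem_Ioi]
    positivity
  have hu : Tendsto u (𝓝[>] 1) (𝓝[≠] 0) := by
    apply tendsto_nhdsWithin_of_tendsto_nhds_of_eventually_within _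
      (hu0.mono_left nhdsWithin_le_nhds)
    filter_upwards [self_mem_nhdsWithin] with y hy
    exact ne_of_gt (hupos y hy)
  have hid : Tendsto (fun y : ℝ => y) (𝓝[>] (1:ℝ)) (𝓝 1) :=
    tendsto_id.mono_left nhdsWithin_le_nhds
  have hinner : Tendsto (fun y => (y / Real.sqrt (y ^ 2 - 1)) *
      Real.tan ((Real.sqrt (y ^ 2 - 1) / 4) * L)) (𝓝[>] (1:ℝ)) (𝓝 (L / 4)) := by
    have hcomb : Tendsto (fun y => y * (L / 4) * (Real.tan (u y) / u y)) (𝓝[>] (1:ℝ))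
        (𝓝 (1 * (L / 4) * 1)) :=
      (hid.mul_const (L / 4)).mul (tan_div_self_tendsto.comp hu)
    rw [show (1:ℝ) * (L / 4) * 1 = L / 4 by ring] at hcomb
    refine hcomb.congr' ?_
    filter_upwards [self_mem_nhdsWithin] with y hy
    have hs : 0 < Real.sqrt (y ^ 2 - 1) := by
      simp only [Set.mem_Ioi] at hy; apply Real.sqrt_pos.mpr; nlinarith
    have huy : u y = Real.sqrt (y ^ 2 - 1) / 4 * L := rfl
    rw [huy]
    field_simp
  have := (hid.mul_const L).sub
    (((Real.continuous_arctan.tendsto (L / 4)).comp hinner).const_mul 4)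
  unfold lf
  simpa using this

/-- The lune lower bound for `λ > 1` dominates the `λ`-independent bound
`L - 4·arctan(L/4)` (normalization `k = 1`). -/
theorem lune_bound_ge_weak_bound (lam L : ℝ) (hlam : 1 < lam) (hL : 0 < L)
    (harg : Real.sqrt (lam ^ 2 - 1) * L < 2 * π) :
    lam * L - 4 * Real.arctan ((lam / Real.sqrt (lam ^ 2 - 1)) *
        Real.tan ((Real.sqrt (lam ^ 2 - 1) / 4) * L))
      ≥ L - 4 * Real.arctan (L / 4) := by
  have hev : ∀ᶠ y in 𝓝[>] (1:ℝ), lf L y ≤ lf L lam := by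
    filter_upwards [Ioo_mem_nhdsGT_of_mem ⟨le_refl (1:ℝ), hlam⟩] with y hy
    exact lf_mono_le L hL lam hlam harg y hy
  have := le_of_tendsto (lf_tendsto L hL) hev
  simpa [lf] using this
end

section
/- Let μ₀, μ₁ ∈ ℝ, let u be a bounded measurable function on an interval (t₁, t₂), and let x₁, x₂, p₁, p₂ be absolutely continuous real functions on (t₁, t₂) with x₁(t)² + x₂(t)² < 1 for all t, satisfying almost everywhere the phase system ẋ₁ = x₂, ẋ₂ = u·((1 − x₁² − x₂²)/(1 − x₁²))^(3/2) − x₁, and the adjoint equation ṗ₂ = −∂H/∂x₂ (with H as below, the partial derivative evaluated along the trajectory). If the switching function H₁(t) = μ₁·√(1 − x₁² − x₂²)/(1 − x₁²) + p₂·((1 − x₁² − x₂²)/(1 − x₁²))^(3/2) vanishes identically on (t₁, t₂), then on (t₁, t₂): p₂ = −μ₁·√(1 − x₁²)/(1 − x₁² − x₂²) and p₁ = −x₂·( μ₁·x₁·√(1 − x₁²) + μ₀·√(1 − x₁² − x₂²) ) / ( (1 − x₁²)·(1 − x₁² − x₂²) ). -/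
open Real MeasureTheory

lemma eqOn_of_ae_imp {f g : ℝ → ℝ} {s : Set ℝ} (hs : IsOpen s)
    (hf : ContinuousOn f s) (hg : ContinuousOn g s)
    (h : ∀ᵐ t ∂(volume : Measure ℝ), t ∈ s → f t = g t) :
    ∀ t ∈ s, f t = g t := by
  intro t hts
  by_contra hne
  have hcont : ContinuousOn (fun x => f x - g x) s := hf.sub hg
  have hV : IsOpen (s ∩ (fun x => f x - g x) ⁻¹' {(0:ℝ)}ᶜ) :=
    hcont.isOpen_inter_preimage hs isOpen_compl_singleton
  have htV : t ∈ s ∩ (fun x => f x - g x) ⁻¹' {(0:ℝ)}ᶜ := by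
    refine ⟨hts, ?_⟩
    simp only [Set.mem_preimage, Set.mem_compl_iff, Set.mem_singleton_iff, sub_eq_zero]
    exact hne
  have hpos := hV.measure_pos (volume : Measure ℝ) ⟨t, htV⟩
  have hnull : (volume : Measure ℝ) {x | ¬ (x ∈ s → f x = g x)} = 0 := by
    simpa [ae_iff] using h
  have hsub : (s ∩ (fun x => f x - g x) ⁻¹' {(0:ℝ)}ᶜ) ⊆ {x | ¬ (x ∈ s → f x = g x)} := by
    rintro x ⟨hxs, hx⟩
    simp only [Set.mem_preimage, Set.mem_compl_iff, Set.mem_singleton_iff, sub_eq_zero] at hx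
    exact fun hxx => hx (hxx hxs)
  exact absurd (measure_mono_null hsub hnull) hpos.ne'

lemma rpow_three_halves {b : ℝ} (hb : 0 ≤ b) : b ^ ((3:ℝ)/2) = Real.sqrt b ^ 3 := by
  rw [show ((3:ℝ)/2) = (1/2:ℝ) * 3 by norm_num, Real.rpow_mul hb, ← Real.sqrt_eq_rpow,
    show ((3:ℝ)) = ((3:ℕ):ℝ) by norm_num, Real.rpow_natCast]

lemma p2_formula' {sa sq P₂ μ₁ : ℝ} (hsa : 0 < sa) (hsq : 0 < sq)
    (h : μ₁ * sq / sa^2 + P₂ * (sq^3/sa^3) = 0) : P₂ = -μ₁ * sa / sq^2 := by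
  have hsa' := hsa.ne'
  have hsq' := hsq.ne'
  field_simp at h
  rw [eq_div_iff (pow_ne_zero 2 hsq.ne')]
  apply mul_left_cancel₀ (mul_ne_zero hsq' (pow_ne_zero 2 hsa'))
  linear_combination sa^2 * h

lemma p2_formula {a Q P₂ μ₁ : ℝ} (ha : 0 < a) (hQ : 0 < Q)
    (h : μ₁ * Real.sqrt Q / a + P₂ * (Q / a) ^ ((3:ℝ)/2) = 0) :
    P₂ = -μ₁ * Real.sqrt a / Q := by
  rw [Real.div_rpow hQ.le ha.le, rpow_three_halves hQ.le, rpow_three_halves ha.le] at h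
  set sa := Real.sqrt a with hsadef
  set sq := Real.sqrt Q with hsqdef
  have hsa2 : sa^2 = a := Real.sq_sqrt ha.le
  have hsq2 : sq^2 = Q := Real.sq_sqrt hQ.le
  have hsa0 : 0 < sa := Real.sqrt_pos.2 ha
  have hsq0 : 0 < sq := Real.sqrt_pos.2 hQ
  have key : P₂ * sq^2 = -μ₁ * sa := by
    field_simp at h
    apply mul_left_cancel₀ (mul_ne_zero hsq0.ne' (pow_ne_zero 2 hsa0.ne'))
    linear_combination h + P₂ * sq^3 * hsa2
  rw [hsq2] at key
  rw [eq_div_iff hQ.ne']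
  exact key

lemma p1_algebra {A B U P₁ P₂ μ₀ μ₁ : ℝ} (ha : 0 < 1 - A^2) (hQ : 0 < 1 - A^2 - B^2)
    (hp2 : P₂ = -μ₁ * Real.sqrt (1-A^2) / (1-A^2-B^2))
    (huniq : -(P₁ + P₂ * (U * (-(2*B)/(1-A^2) * ((3:ℝ)/2) *
          ((1-A^2-B^2)/(1-A^2)) ^ ((3:ℝ)/2 - 1)))
        + μ₁ * U * (-(2*B)/(2*Real.sqrt (1-A^2-B^2)))/(1-A^2)
        - μ₀ * (-(2*B)/(2*Real.sqrt (1-A^2-B^2))/(1-A^2)))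
      = (-μ₁ * (-(2*A*B)/(2*Real.sqrt (1-A^2))) * (1-A^2-B^2)
          - -μ₁ * Real.sqrt (1-A^2) *
            (-(2*A*B) - 2*B*(U*((1-A^2-B^2)/(1-A^2)) ^ ((3:ℝ)/2) - A)))
        / (1-A^2-B^2)^2) :
    P₁ = -B * (μ₁ * A * Real.sqrt (1-A^2) + μ₀ * Real.sqrt (1-A^2-B^2))
        / ((1-A^2)*(1-A^2-B^2)) := by
  rw [show (3:ℝ)/2 - 1 = 1/2 by norm_num, ← Real.sqrt_eq_rpow,
    Real.sqrt_div hQ.le, Real.div_rpow hQ.le ha.le,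
    rpow_three_halves hQ.le, rpow_three_halves ha.le] at huniq
  rw [hp2] at huniq
  set sa := Real.sqrt (1-A^2) with hsadef
  set sq := Real.sqrt (1-A^2-B^2) with hsqdef
  have hsa2 : sa^2 = 1-A^2 := Real.sq_sqrt ha.le
  have hsq2 : sq^2 = 1-A^2-B^2 := Real.sq_sqrt hQ.le
  have hsa0 : (0:ℝ) < sa := Real.sqrt_pos.2 ha
  have hsq0 : (0:ℝ) < sq := Real.sqrt_pos.2 hQ
  rw [← hsq2, ← hsa2] at huniq ⊢
  rw [eq_div_iff (by positivity)]
  field_simp at huniq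
  apply mul_left_cancel₀ (a := (-16) * sa^9 * sq^6)
  · positivity
  · linear_combination 16 * sa^9 * sq^4 * huniq

/-- Pontryagin's function for the optimal control problem to which the
isoperimetric problem for `λ`-convex curves on the hyperbolic plane of
curvature `-1` is reduced. -/
noncomputable def pontryaginH (μ₀ μ₁ x₁ x₂ p₁ p₂ u : ℝ) : ℝ :=
  p₁ * x₂ + p₂ * (u * ((1 - x₁ ^ 2 - x₂ ^ 2) / (1 - x₁ ^ 2)) ^ ((3 : ℝ) / 2) - x₁)
    + μ₁ * u * Real.sqrt (1 - x₁ ^ 2 - x₂ ^ 2) / (1 - x₁ ^ 2)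
    - μ₀ * (Real.sqrt (1 - x₁ ^ 2 - x₂ ^ 2) / (1 - x₁ ^ 2) - 1)

/-- Along a singular arc (where the switching function `H₁` vanishes
identically), the adjoint variables `p₂` and `p₁` are given by explicit
formulas in the phase variables. -/
theorem adjoint_on_singular_arc (μ₀ μ₁ t₁ t₂ : ℝ) (ht : t₁ < t₂)
    (u x₁ x₂ p₁ p₂ : ℝ → ℝ)
    (hu_meas : Measurable u) (hu_bdd : ∃ C : ℝ, ∀ t ∈ Set.Ioo t₁ t₂, |u t| ≤ C)
    (hx₁ : ContinuousOn x₁ (Set.Ioo t₁ t₂)) (hx₂ : ContinuousOn x₂ (Set.Ioo t₁ t₂))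
    (hp₁ : ContinuousOn p₁ (Set.Ioo t₁ t₂)) (hp₂ : ContinuousOn p₂ (Set.Ioo t₁ t₂))
    (hball : ∀ t ∈ Set.Ioo t₁ t₂, x₁ t ^ 2 + x₂ t ^ 2 < 1)
    (hphase₁ : ∀ᵐ t ∂(volume : Measure ℝ), t ∈ Set.Ioo t₁ t₂ →
      HasDerivAt x₁ (x₂ t) t)
    (hphase₂ : ∀ᵐ t ∂(volume : Measure ℝ), t ∈ Set.Ioo t₁ t₂ →
      HasDerivAt x₂
        (u t * ((1 - x₁ t ^ 2 - x₂ t ^ 2) / (1 - x₁ t ^ 2)) ^ ((3 : ℝ) / 2) - x₁ t) t)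
    (hadj₂ : ∀ᵐ t ∂(volume : Measure ℝ), t ∈ Set.Ioo t₁ t₂ →
      HasDerivAt p₂
        (-(deriv (fun y => pontryaginH μ₀ μ₁ (x₁ t) y (p₁ t) (p₂ t) (u t)) (x₂ t))) t)
    (hsing : ∀ t ∈ Set.Ioo t₁ t₂,
      μ₁ * Real.sqrt (1 - x₁ t ^ 2 - x₂ t ^ 2) / (1 - x₁ t ^ 2)
        + p₂ t * ((1 - x₁ t ^ 2 - x₂ t ^ 2) / (1 - x₁ t ^ 2)) ^ ((3 : ℝ) / 2) = 0) :
    ∀ t ∈ Set.Ioo t₁ t₂,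
      p₂ t = -μ₁ * Real.sqrt (1 - x₁ t ^ 2) / (1 - x₁ t ^ 2 - x₂ t ^ 2) ∧
      p₁ t = -x₂ t *
          (μ₁ * x₁ t * Real.sqrt (1 - x₁ t ^ 2) + μ₀ * Real.sqrt (1 - x₁ t ^ 2 - x₂ t ^ 2))
          / ((1 - x₁ t ^ 2) * (1 - x₁ t ^ 2 - x₂ t ^ 2)) := by
  have hs : IsOpen (Set.Ioo t₁ t₂) := isOpen_Ioo
  have ha : ∀ t ∈ Set.Ioo t₁ t₂, 0 < 1 - x₁ t ^ 2 := fun t htm => by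
    nlinarith [hball t htm, sq_nonneg (x₂ t)]
  have hQ : ∀ t ∈ Set.Ioo t₁ t₂, 0 < 1 - x₁ t ^ 2 - x₂ t ^ 2 := fun t htm => by
    nlinarith [hball t htm]
  have hP2 : ∀ t ∈ Set.Ioo t₁ t₂,
      p₂ t = -μ₁ * Real.sqrt (1 - x₁ t ^ 2) / (1 - x₁ t ^ 2 - x₂ t ^ 2) :=
    fun t htm => p2_formula (ha t htm) (hQ t htm) (hsing t htm)
  -- continuity of the RHS formula for p₁
  have hca : ContinuousOn (fun t => 1 - x₁ t ^ 2) (Set.Ioo t₁ t₂) :=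
    continuousOn_const.sub (hx₁.pow 2)
  have hcQ : ContinuousOn (fun t => 1 - x₁ t ^ 2 - x₂ t ^ 2) (Set.Ioo t₁ t₂) :=
    hca.sub (hx₂.pow 2)
  have hcsa : ContinuousOn (fun t => Real.sqrt (1 - x₁ t ^ 2)) (Set.Ioo t₁ t₂) :=
    Real.continuous_sqrt.comp_continuousOn hca
  have hcsq : ContinuousOn (fun t => Real.sqrt (1 - x₁ t ^ 2 - x₂ t ^ 2)) (Set.Ioo t₁ t₂) :=
    Real.continuous_sqrt.comp_continuousOn hcQ
  have hcontRHS : ContinuousOn (fun t => -x₂ t *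
      (μ₁ * x₁ t * Real.sqrt (1 - x₁ t ^ 2) + μ₀ * Real.sqrt (1 - x₁ t ^ 2 - x₂ t ^ 2))
      / ((1 - x₁ t ^ 2) * (1 - x₁ t ^ 2 - x₂ t ^ 2))) (Set.Ioo t₁ t₂) := by
    apply ContinuousOn.div
    · exact (hx₂.neg).mul (((continuousOn_const.mul hx₁).mul hcsa).add
        (continuousOn_const.mul hcsq))
    · exact hca.mul hcQ
    · intro t htm
      exact (mul_pos (ha t htm) (hQ t htm)).ne'
  -- the p₁ formula holds almost everywhere
  have hae : ∀ᵐ t ∂(volume : Measure ℝ), t ∈ Set.Ioo t₁ t₂ →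
      p₁ t = -x₂ t *
        (μ₁ * x₁ t * Real.sqrt (1 - x₁ t ^ 2) + μ₀ * Real.sqrt (1 - x₁ t ^ 2 - x₂ t ^ 2))
        / ((1 - x₁ t ^ 2) * (1 - x₁ t ^ 2 - x₂ t ^ 2)) := by
    filter_upwards [hphase₁, hphase₂, hadj₂] with t h1 h2 h3
    intro hts
    replace h1 := h1 hts
    replace h2 := h2 hts
    replace h3 := h3 hts
    have haT := ha t hts
    have hQT := hQ t hts
    -- derivative of Pontryagin's function in the second phase variable
    have e1 : HasDerivAt (fun y : ℝ => 1 - x₁ t ^ 2 - y ^ 2) (-(2 * x₂ t)) (x₂ t) := by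
      simpa using (hasDerivAt_pow 2 (x₂ t)).const_sub (1 - x₁ t ^ 2)
    have e2 : HasDerivAt (fun y : ℝ => (1 - x₁ t ^ 2 - y ^ 2) / (1 - x₁ t ^ 2))
        (-(2 * x₂ t) / (1 - x₁ t ^ 2)) (x₂ t) := e1.div_const _
    have e3 := e2.rpow_const (p := (3:ℝ)/2) (Or.inr (by norm_num))
    have e4 : HasDerivAt (fun y : ℝ => Real.sqrt (1 - x₁ t ^ 2 - y ^ 2))
        (-(2 * x₂ t) / (2 * Real.sqrt (1 - x₁ t ^ 2 - x₂ t ^ 2))) (x₂ t) := e1.sqrt hQT.ne'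
    have e5 : HasDerivAt (fun y : ℝ => p₁ t * y) (p₁ t) (x₂ t) := by
      simpa using (hasDerivAt_id (x₂ t)).const_mul (p₁ t)
    have e6 := ((e3.const_mul (u t)).sub_const (x₁ t)).const_mul (p₂ t)
    have e7 := (e4.const_mul (μ₁ * u t)).div_const (1 - x₁ t ^ 2)
    have e8 := ((e4.div_const (1 - x₁ t ^ 2)).sub_const 1).const_mul μ₀
    have h9 := ((e5.add e6).add e7).sub e8
    have hD : deriv (fun y => pontryaginH μ₀ μ₁ (x₁ t) y (p₁ t) (p₂ t) (u t)) (x₂ t)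
        = p₁ t + p₂ t * (u t * (-(2 * x₂ t) / (1 - x₁ t ^ 2) * ((3:ℝ)/2) *
            ((1 - x₁ t ^ 2 - x₂ t ^ 2) / (1 - x₁ t ^ 2)) ^ ((3:ℝ)/2 - 1)))
          + μ₁ * u t * (-(2 * x₂ t) / (2 * Real.sqrt (1 - x₁ t ^ 2 - x₂ t ^ 2)))
            / (1 - x₁ t ^ 2)
          - μ₀ * (-(2 * x₂ t) / (2 * Real.sqrt (1 - x₁ t ^ 2 - x₂ t ^ 2))
            / (1 - x₁ t ^ 2)) := h9.deriv
    -- derivative of the explicit formula for p₂ along the trajectory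
    have f1 : HasDerivAt (fun τ => 1 - x₁ τ ^ 2) (-(2 * x₁ t * x₂ t)) t := by
      simpa [mul_comm, mul_assoc] using (h1.pow 2).const_sub 1
    have f2 : HasDerivAt (fun τ => Real.sqrt (1 - x₁ τ ^ 2))
        (-(2 * x₁ t * x₂ t) / (2 * Real.sqrt (1 - x₁ t ^ 2))) t := f1.sqrt haT.ne'
    have f3 := f2.const_mul (-μ₁)
    have f4 : HasDerivAt (fun τ => 1 - x₁ τ ^ 2 - x₂ τ ^ 2)
        (-(2 * x₁ t * x₂ t) - 2 * x₂ t *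
          (u t * ((1 - x₁ t ^ 2 - x₂ t ^ 2) / (1 - x₁ t ^ 2)) ^ ((3:ℝ)/2) - x₁ t)) t := by
      have := f1.fun_sub (h2.fun_pow 2)
      simpa [mul_comm, mul_assoc] using this
    have f5 := f3.div f4 hQT.ne'
    have hloc : p₂ =ᶠ[nhds t]
        (fun τ => -μ₁ * Real.sqrt (1 - x₁ τ ^ 2) / (1 - x₁ τ ^ 2 - x₂ τ ^ 2)) := by
      filter_upwards [hs.mem_nhds hts] with τ hτ
      exact hP2 τ hτ
    have hp2' := f5.congr_of_eventuallyEq hloc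
    have huniq := h3.unique hp2'
    rw [hD] at huniq
    exact p1_algebra haT hQT (hP2 t hts) huniq
  have hp1all := eqOn_of_ae_imp hs hp₁ hcontRHS hae
  intro t htm
  exact ⟨hP2 t htm, hp1all t htm⟩
end
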